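/- Let a be a positive integer, b an integer coprime to a, b' an integer with b·b' ≡ 1 (mod a), and n an integer. Then ∑_{r=0}^{a−1} {(n + r·b)/a} · (((r + 1/2)/a)) = s(b, a; (n − b/2)/a, 1/2) − (1/2)·(((−n·b' + 1/2)/a)). -/

import Mathlib

open scoped BigOperators

/-- The sawtooth function `((x))`: `x - ⌊x⌋ - 1/2` if `x` is not an integer, `0` otherwise. -/
noncomputable def sawtooth (x : ℝ) : ℝ :=
  if Int.fract x = 0 then 0 else Int.fract x - 1/2

/-- The Dedekind–Rademacher sum `s(b, a; x, y)`. -/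
noncomputable def drSum (b : ℤ) (a : ℕ) (x y : ℝ) : ℝ :=
  ∑ j ∈ Finset.range a, sawtooth (x + b * ((j : ℝ) + y) / a) * sawtooth (((j : ℝ) + y) / a)

lemma sumIdReal (a : ℕ) : ∑ r ∈ Finset.range a, (r : ℝ) = a * (a - 1) / 2 := by
  induction a with
  | zero => simp
  | succ k ih =>
    rw [Finset.sum_range_succ, ih]
    push_cast; ring

lemma sawtooth_congr {x y : ℝ} (h : Int.fract x = Int.fract y) : sawtooth x = sawtooth y := by
  unfold sawtooth; rw [h]

theorem fract_sawtooth_sum_eq_drSum (a : ℕ) (ha : 0 < a) (b b' n : ℤ)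
    (hb : Int.gcd b a = 1) (hbb' : b * b' ≡ 1 [ZMOD (a : ℤ)]) :
    ∑ r ∈ Finset.range a,
        Int.fract (((n : ℝ) + (r : ℝ) * b) / a) * sawtooth (((r : ℝ) + 1/2) / a)
      = drSum b a (((n : ℝ) - (b : ℝ) / 2) / a) (1/2)
        - (1/2) * sawtooth ((-(n : ℝ) * (b' : ℝ) + 1/2) / a) := by
  have haR : (0:ℝ) < a := by exact_mod_cast ha
  have haR' : (a:ℝ) ≠ 0 := ne_of_gt haR
  set r₀ : ℕ := ((-n * b') % a).toNat with hr₀def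
  have haZ : (0:ℤ) < a := by exact_mod_cast ha
  have hr₀cast : (r₀ : ℤ) = (-n * b') % a := by
    rw [hr₀def, Int.toNat_of_nonneg (Int.emod_nonneg _ (ne_of_gt haZ))]
  have hr₀lt : r₀ < a := by
    have := Int.emod_lt_of_pos (-n * b') haZ
    omega
  -- divisibility characterization
  have hdvd : ∀ r : ℕ, r < a →
      (Int.fract (((n : ℝ) + (r : ℝ) * b) / a) = 0 ↔ r = r₀) := by
    intro r hr
    have hcast : ((n : ℝ) + (r : ℝ) * b) / a = ((n + (r:ℤ) * b : ℤ) : ℝ) / ((a:ℕ) : ℝ) := by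
      push_cast; ring
    rw [hcast, Int.fract_div_intCast_eq_div_intCast_mod]
    rw [div_eq_zero_iff]
    have hmodeq : ((n + (r:ℤ) * b) % a = 0) ↔ ((r:ℤ) = (-n * b') % a) := by
      constructor
      · intro h
        have h0 : (n + (r:ℤ) * b) ≡ 0 [ZMOD (a:ℤ)] := by
          simpa [Int.ModEq] using h
        have h1 : (r:ℤ) ≡ -n * b' [ZMOD (a:ℤ)] := by
          calc (r:ℤ) = (r:ℤ) * 1 := by ring
            _ ≡ (r:ℤ) * (b * b') [ZMOD (a:ℤ)] := (hbb'.mul_left r).symm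
            _ = (n + (r:ℤ) * b) * b' - n * b' := by ring
            _ ≡ 0 * b' - n * b' [ZMOD (a:ℤ)] := (h0.mul_right b').sub (Int.ModEq.refl _)
            _ = -n * b' := by ring
        have : (r:ℤ) % a = (-n * b') % a := h1
        rwa [Int.emod_eq_of_lt (by positivity) (by exact_mod_cast hr)] at this
      · intro h
        have h1 : (r:ℤ) ≡ -n * b' [ZMOD (a:ℤ)] := by
          rw [h]; exact Int.emod_emod_of_dvd _ dvd_rfl
        have h2 : (n + (r:ℤ) * b) ≡ n + (-n * b') * b [ZMOD (a:ℤ)] :=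
          (Int.ModEq.refl n).add (h1.mul_right b)
        have h3 : (n + (-n * b') * b) ≡ n + (-n) * 1 [ZMOD (a:ℤ)] := by
          have : (-n * b') * b = (-n) * (b * b') := by ring
          rw [this]
          exact (Int.ModEq.refl n).add (hbb'.mul_left (-n))
        have h4 : (n + (r:ℤ) * b) ≡ 0 [ZMOD (a:ℤ)] := by
          have := h2.trans h3
          simpa using this
        simpa [Int.ModEq] using h4
    constructor
    · intro h
      rcases h with h | h
      · have : (n + (r:ℤ) * b) % a = 0 := by exact_mod_cast h
        have := hmodeq.1 this
        omega
      · exact absurd h (by exact_mod_cast haR')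
    · intro h
      left
      have : (r:ℤ) = (-n * b') % a := by rw [h, hr₀cast]
      have := hmodeq.2 this
      exact_mod_cast this
  -- S r values
  have hSval : ∀ r : ℕ, r < a →
      sawtooth (((r : ℝ) + 1/2) / a) = ((r : ℝ) + 1/2) / a - 1/2 := by
    intro r hr
    have h01 : (0:ℝ) < ((r : ℝ) + 1/2) / a := by positivity
    have h1 : ((r : ℝ) + 1/2) / a < 1 := by
      rw [div_lt_one haR]
      have : (r:ℝ) + 1 ≤ a := by exact_mod_cast hr
      linarith
    have hf : Int.fract (((r : ℝ) + 1/2) / a) = ((r : ℝ) + 1/2) / a :=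
      Int.fract_eq_self.2 ⟨le_of_lt h01, h1⟩
    unfold sawtooth
    rw [hf, if_neg (ne_of_gt h01)]
  -- sum of S is zero
  have hSsum : ∑ r ∈ Finset.range a, sawtooth (((r : ℝ) + 1/2) / a) = 0 := by
    rw [Finset.sum_congr rfl (fun r hr => hSval r (Finset.mem_range.1 hr))]
    have hstep : ∀ r : ℕ, ((r : ℝ) + 1/2) / a - 1/2
        = (r : ℝ) / a + (1/(2*(a:ℝ)) - 1/2) := by
      intro r; field_simp; ring
    rw [Finset.sum_congr rfl (fun r _ => hstep r), Finset.sum_add_distrib,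
      ← Finset.sum_div, sumIdReal a, Finset.sum_const, Finset.card_range, nsmul_eq_mul]
    field_simp
    ring
  -- drSum rewrite
  have hdr : drSum b a (((n : ℝ) - (b : ℝ) / 2) / a) (1/2)
      = ∑ r ∈ Finset.range a,
          sawtooth (((n : ℝ) + (r : ℝ) * b) / a) * sawtooth (((r : ℝ) + 1/2) / a) := by
    unfold drSum
    refine Finset.sum_congr rfl fun r _ => ?_
    congr 2
    field_simp
    ring
  -- per-term fract decomposition
  have hterm : ∀ r : ℕ, Int.fract (((n : ℝ) + (r : ℝ) * b) / a)
      = sawtooth (((n : ℝ) + (r : ℝ) * b) / a)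
        + (if Int.fract (((n : ℝ) + (r : ℝ) * b) / a) = 0 then (0:ℝ) else 1/2) := by
    intro r
    unfold sawtooth
    split <;> simp_all
  -- the sawtooth at r₀ matches the RHS sawtooth
  have hS0 : sawtooth (((r₀ : ℝ) + 1/2) / a) = sawtooth ((-(n : ℝ) * (b' : ℝ) + 1/2) / a) := by
    apply sawtooth_congr
    have hq : ∃ q : ℤ, (-n * b' : ℤ) = q * a + r₀ := ⟨(-n * b') / a, by
      rw [hr₀cast]; rw [Int.ediv_mul_add_emod] ⟩
    rcases hq with ⟨q, hq⟩
    have : (-(n : ℝ) * (b' : ℝ) + 1/2) / a = ((r₀ : ℝ) + 1/2) / a + q := by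
      have h : (-(n:ℝ) * (b':ℝ)) = q * a + r₀ := by exact_mod_cast hq
      rw [h]; field_simp; ring
    rw [this, Int.fract_add_intCast]
  calc ∑ r ∈ Finset.range a,
        Int.fract (((n : ℝ) + (r : ℝ) * b) / a) * sawtooth (((r : ℝ) + 1/2) / a)
      = ∑ r ∈ Finset.range a,
          (sawtooth (((n : ℝ) + (r : ℝ) * b) / a) * sawtooth (((r : ℝ) + 1/2) / a)
            + ((1/2) * sawtooth (((r : ℝ) + 1/2) / a)
              - (if r = r₀ then (1/2) * sawtooth (((r : ℝ) + 1/2) / a) else 0))) := by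
        refine Finset.sum_congr rfl fun r hr => ?_
        rw [hterm r]
        by_cases hc : Int.fract (((n : ℝ) + (r : ℝ) * b) / a) = 0
        · rw [if_pos hc, if_pos ((hdvd r (Finset.mem_range.1 hr)).1 hc)]; ring
        · rw [if_neg hc, if_neg (fun h => hc ((hdvd r (Finset.mem_range.1 hr)).2 h))]; ring
    _ = drSum b a (((n : ℝ) - (b : ℝ) / 2) / a) (1/2)
        - (1/2) * sawtooth ((-(n : ℝ) * (b' : ℝ) + 1/2) / a) := by
        rw [Finset.sum_add_distrib, Finset.sum_sub_distrib, ← Finset.mul_sum, hSsum,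
          Finset.sum_ite_eq' (Finset.range a) r₀, if_pos (Finset.mem_range.2 hr₀lt),
          hdr, hS0]
        ring
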